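/- arXiv:1602.01408 — 2 statements merged into one kernel-verified Lean document; each statement's English description precedes it below -/
import Mathlib

section
/- Let α > −1 be a real number, let M = (C^(α),2) be the generalized Cesàro operator of order two on ℓ², and let B be the bounded operator on ℓ² with matrix entries b_{ij} = 2(j+1−3i−2α)/((j+3+α)(j+4+α)) if j > i−2, b_{ij} = (j+1+α)(j+2+α)/((j+3+α)(j+4+α)) if j = i−2, and b_{ij} = 0 if j < i−2. Then B M = M*. -/
open ContinuousLinearMap

/-- The standard orthonormal basis vectors of `ℓ² = ℓ²(ℕ, ℂ)`. -/
noncomputable def e (n : ℕ) : lp (fun _ : ℕ => ℂ) 2 := lp.single 2 n 1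

namespace CesaroTwoAux

open Finset Filter Polynomial Topology

/-- Real matrix entry of `M`. -/
noncomputable def mr (α : ℝ) (i j : ℕ) : ℝ :=
  if j ≤ i then 2 * ((i : ℝ) + 1 - j) / (((i : ℝ) + 1 + α) * ((i : ℝ) + 2 + α)) else 0

/-- Real matrix entry of `B`. -/
noncomputable def br (α : ℝ) (i j : ℕ) : ℝ :=
  if (i : ℤ) - 2 < (j : ℤ) then
    2 * ((j : ℝ) + 1 - 3 * i - 2 * α) / (((j : ℝ) + 3 + α) * ((j : ℝ) + 4 + α))
  else if (j : ℤ) = (i : ℤ) - 2 then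
    (((j : ℝ) + 1 + α) * ((j : ℝ) + 2 + α)) / ((((j : ℝ) + 3 + α)) * (((j : ℝ) + 4 + α)))
  else 0

/-- The telescoping antiderivative. -/
noncomputable def Fa (α : ℝ) (i j : ℕ) (x : ℝ) : ℝ :=
  (4 * x ^ 2 + (10 - 6 * (i : ℝ) - 2 * (j : ℝ)) * x +
      (6 - 2 * (j : ℝ) - 6 * (i : ℝ) + 4 * (i : ℝ) * (j : ℝ) + 2 * α + 2 * α * (j : ℝ)
        - 2 * α * (i : ℝ))) /
    ((x + 1 + α) * (x + 2 + α) * (x + 3 + α))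

variable {α : ℝ}

lemma pos_den (hα : -1 < α) {x : ℝ} (hx : 0 ≤ x) {c : ℝ} (hc : 1 ≤ c) : 0 < x + c + α := by
  linarith

lemma Fa_tendsto (hα : -1 < α) (i j : ℕ) : Tendsto (Fa α i j) atTop (𝓝 0) := by
  have h :=
    Polynomial.div_tendsto_zero_of_degree_lt
      (C (4:ℝ) * X ^ 2 + C (10 - 6 * (i : ℝ) - 2 * (j : ℝ)) * X +
        C (6 - 2 * (j : ℝ) - 6 * (i : ℝ) + 4 * (i : ℝ) * (j : ℝ) + 2 * α + 2 * α * (j : ℝ)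
            - 2 * α * (i : ℝ)))
      ((X + C (1 + α)) * (X + C (2 + α)) * (X + C (3 + α)))
      (by
        have hQ : (((X + C (1 + α)) * (X + C (2 + α)) * (X + C (3 + α))) : ℝ[X]).degree = 3 := by
          rw [degree_mul, degree_mul, degree_X_add_C, degree_X_add_C, degree_X_add_C]
          rfl
        rw [hQ]
        exact lt_of_le_of_lt degree_quadratic_le (by norm_num))
  have heq : (fun x : ℝ =>
      eval x (C (4:ℝ) * X ^ 2 + C (10 - 6 * (i : ℝ) - 2 * (j : ℝ)) * X +
        C (6 - 2 * (j : ℝ) - 6 * (i : ℝ) + 4 * (i : ℝ) * (j : ℝ) + 2 * α + 2 * α * (j : ℝ)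
            - 2 * α * (i : ℝ))) /
      eval x ((X + C (1 + α)) * (X + C (2 + α)) * (X + C (3 + α)))) = Fa α i j := by
    funext x
    simp only [eval_mul, eval_add, eval_pow, eval_X, eval_C, Fa]
    rw [show x + (1 + α) = x + 1 + α by ring, show x + (2 + α) = x + 2 + α by ring,
      show x + (3 + α) = x + 3 + α by ring]
  rwa [heq] at h

/-- The generic telescoping identity, over ℝ. -/
lemma tel (hα : -1 < α) (i j : ℕ) {x : ℝ} (hx : 0 ≤ x) :
    2 * (x + 1 - 3 * (i : ℝ) - 2 * α) / ((x + 3 + α) * (x + 4 + α)) *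
      (2 * (x + 1 - (j : ℝ)) / ((x + 1 + α) * (x + 2 + α)))
    = Fa α i j x - Fa α i j (x + 1) := by
  have n1 : x + 1 + α ≠ 0 := ne_of_gt (pos_den hα hx le_rfl)
  have n2 : x + 2 + α ≠ 0 := ne_of_gt (pos_den hα hx (by norm_num))
  have n3 : x + 3 + α ≠ 0 := ne_of_gt (pos_den hα hx (by norm_num))
  have n4 : x + 4 + α ≠ 0 := ne_of_gt (pos_den hα hx (by norm_num))
  have n2' : x + 1 + 1 + α ≠ 0 := by rw [show x + 1 + 1 + α = x + 2 + α by ring]; exact n2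
  have n3' : x + 1 + 2 + α ≠ 0 := by rw [show x + 1 + 2 + α = x + 3 + α by ring]; exact n3
  have n4' : x + 1 + 3 + α ≠ 0 := by rw [show x + 1 + 3 + α = x + 4 + α by ring]; exact n4
  simp only [Fa]
  field_simp
  ring

/-- Boundary identity A. -/
lemma idA (hα : -1 < α) (i j : ℕ) :
    Fa α i j (j : ℝ) = 2 * ((j : ℝ) + 1 - i) / (((j : ℝ) + 1 + α) * ((j : ℝ) + 2 + α)) := by
  have hx : (0:ℝ) ≤ (j : ℝ) := Nat.cast_nonneg j
  have n1 : (j : ℝ) + 1 + α ≠ 0 := ne_of_gt (pos_den hα hx le_rfl)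
  have n2 : (j : ℝ) + 2 + α ≠ 0 := ne_of_gt (pos_den hα hx (by norm_num))
  have n3 : (j : ℝ) + 3 + α ≠ 0 := ne_of_gt (pos_den hα hx (by norm_num))
  simp only [Fa]
  field_simp
  ring

/-- Boundary identity C. -/
lemma idC (hα : -1 < α) (i j : ℕ) (hi : (1:ℝ) ≤ (i : ℝ)) :
    2 * ((i : ℝ) - 1 - j) / (((i : ℝ) + 1 + α) * ((i : ℝ) + 2 + α))
      + Fa α i j ((i : ℝ) - 1) = 0 := by
  have n0 : (i : ℝ) + α ≠ 0 := ne_of_gt (by linarith)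
  have n1 : (i : ℝ) + 1 + α ≠ 0 := ne_of_gt (by linarith)
  have n2 : (i : ℝ) + 2 + α ≠ 0 := ne_of_gt (by linarith)
  have n0' : (i : ℝ) - 1 + 1 + α ≠ 0 := by
    rw [show (i : ℝ) - 1 + 1 + α = (i : ℝ) + α by ring]; exact n0
  have n1' : (i : ℝ) - 1 + 2 + α ≠ 0 := by
    rw [show (i : ℝ) - 1 + 2 + α = (i : ℝ) + 1 + α by ring]; exact n1
  have n2' : (i : ℝ) - 1 + 3 + α ≠ 0 := by
    rw [show (i : ℝ) - 1 + 3 + α = (i : ℝ) + 2 + α by ring]; exact n2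
  simp only [Fa]
  field_simp
  ring

/-- The key summation identity: row `i` of `B` against column `j` of `M`. -/
theorem key (hα : -1 < α) (i j : ℕ) :
    HasSum (fun k => br α i k * mr α k j) (mr α j i) := by
  classical
  set K : ℕ := 3 * i + j + ⌈2 * α⌉₊ + 2 with hK
  have hKr : (K : ℝ) = 3 * (i : ℝ) + (j : ℝ) + (⌈2 * α⌉₊ : ℝ) + 2 := by
    rw [hK]; push_cast; ring
  have hceil : 2 * α ≤ (⌈2 * α⌉₊ : ℝ) := Nat.le_ceil _
  -- generic term identity
  have hgen : ∀ k : ℕ, j ≤ k → i ≤ k + 1 →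
      br α i k * mr α k j = Fa α i j (k : ℝ) - Fa α i j ((k : ℝ) + 1) := by
    intro k hjk hik
    simp only [br, mr]
    rw [if_pos (by omega : (i : ℤ) - 2 < (k : ℤ)), if_pos hjk]
    exact tel hα i j (Nat.cast_nonneg k)
  -- nonnegativity of terms past K
  have hnn : ∀ n : ℕ, 0 ≤ br α i (n + K) * mr α (n + K) j := by
    intro n
    have hjk : j ≤ n + K := by omega
    have hcast : ((n + K : ℕ) : ℝ) = (n : ℝ) + (K : ℝ) := by push_cast; ring
    simp only [br, mr]
    rw [if_pos (by omega : (i : ℤ) - 2 < ((n + K : ℕ) : ℤ)), if_pos hjk]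
    have hx : (0:ℝ) ≤ ((n + K : ℕ) : ℝ) := Nat.cast_nonneg _
    have d1 := pos_den hα hx (le_refl (1:ℝ))
    have d2 := pos_den hα hx (by norm_num : (1:ℝ) ≤ 2)
    have d3 := pos_den hα hx (by norm_num : (1:ℝ) ≤ 3)
    have d4 := pos_den hα hx (by norm_num : (1:ℝ) ≤ 4)
    have hn1 : 0 ≤ 2 * (((n + K : ℕ) : ℝ) + 1 - 3 * i - 2 * α) := by
      have : (0:ℝ) ≤ (n : ℝ) := Nat.cast_nonneg n
      have : (0:ℝ) ≤ (j : ℝ) := Nat.cast_nonneg j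
      rw [hcast, hKr]; linarith
    have hn2 : 0 ≤ 2 * (((n + K : ℕ) : ℝ) + 1 - j) := by
      have hjr : (j : ℝ) ≤ ((n + K : ℕ) : ℝ) := Nat.cast_le.2 hjk
      linarith
    exact mul_nonneg (div_nonneg hn1 (le_of_lt (mul_pos d3 d4)))
      (div_nonneg hn2 (le_of_lt (mul_pos d1 d2)))
  -- partial sums of the shifted series
  have hps : ∀ N : ℕ, ∑ n ∈ range N, br α i (n + K) * mr α (n + K) j
      = Fa α i j ((K : ℕ) : ℝ) - Fa α i j (((N + K : ℕ)) : ℝ) := by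
    intro N
    have hterm : ∀ n : ℕ,
        br α i (n + K) * mr α (n + K) j
          = Fa α i j (((n + K : ℕ)) : ℝ) - Fa α i j (((n + 1 + K : ℕ)) : ℝ) := by
      intro n
      rw [hgen (n + K) (by omega) (by omega)]
      congr 2
      push_cast; ring
    calc ∑ n ∈ range N, br α i (n + K) * mr α (n + K) j
        = ∑ n ∈ range N,
            ((fun m : ℕ => Fa α i j (((m + K : ℕ)) : ℝ)) n
              - (fun m : ℕ => Fa α i j (((m + K : ℕ)) : ℝ)) (n + 1)) :=
          Finset.sum_congr rfl fun n _ => hterm n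
      _ = Fa α i j (((0 + K : ℕ)) : ℝ) - Fa α i j (((N + K : ℕ)) : ℝ) :=
          Finset.sum_range_sub' (fun m : ℕ => Fa α i j (((m + K : ℕ)) : ℝ)) N
      _ = Fa α i j ((K : ℕ) : ℝ) - Fa α i j (((N + K : ℕ)) : ℝ) := by rw [Nat.zero_add]
  -- the shifted series has sum Fa K
  have hshift : HasSum (fun n => br α i (n + K) * mr α (n + K) j) (Fa α i j ((K : ℕ) : ℝ)) := by
    rw [hasSum_iff_tendsto_nat_of_nonneg hnn]
    simp only [hps]
    have hcomp : Tendsto (fun N : ℕ => Fa α i j (((N + K : ℕ)) : ℝ)) atTop (𝓝 0) := by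
      have h1 : Tendsto (fun N : ℕ => ((N + K : ℕ) : ℝ)) atTop atTop :=
        tendsto_natCast_atTop_atTop.comp (tendsto_add_atTop_nat K)
      exact (Fa_tendsto hα i j).comp h1
    simpa using tendsto_const_nhds.sub hcomp
  have hfull := (hasSum_nat_add_iff (f := fun k => br α i k * mr α k j) K).1 hshift
  -- compute the finitely many initial terms
  have hIco : ∀ s : ℕ, j ≤ s → i ≤ s + 1 → s ≤ K →
      ∑ k ∈ Ico s K, br α i k * mr α k j
        = Fa α i j ((s : ℕ) : ℝ) - Fa α i j ((K : ℕ) : ℝ) := by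
    intro s hs1 hs2 hsK
    rw [Finset.sum_Ico_eq_sum_range]
    have hterm : ∀ n : ℕ,
        br α i (s + n) * mr α (s + n) j
          = Fa α i j (((s + n : ℕ)) : ℝ) - Fa α i j (((s + (n + 1) : ℕ)) : ℝ) := by
      intro n
      rw [hgen (s + n) (by omega) (by omega)]
      congr 2
      push_cast; ring
    calc ∑ n ∈ range (K - s), br α i (s + n) * mr α (s + n) j
        = ∑ n ∈ range (K - s),
            ((fun m : ℕ => Fa α i j (((s + m : ℕ)) : ℝ)) n
              - (fun m : ℕ => Fa α i j (((s + m : ℕ)) : ℝ)) (n + 1)) :=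
          Finset.sum_congr rfl fun n _ => hterm n
      _ = Fa α i j (((s + 0 : ℕ)) : ℝ) - Fa α i j (((s + (K - s) : ℕ)) : ℝ) :=
          Finset.sum_range_sub' (fun m : ℕ => Fa α i j (((s + m : ℕ)) : ℝ)) (K - s)
      _ = Fa α i j ((s : ℕ) : ℝ) - Fa α i j ((K : ℕ) : ℝ) := by
          rw [Nat.add_zero, (by omega : s + (K - s) = K)]
  have hval : Fa α i j ((K : ℕ) : ℝ) + ∑ k ∈ range K, br α i k * mr α k j = mr α j i := by
    by_cases hcase : i ≤ j + 1
    · -- terms below j vanish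
      have hsub : ∑ k ∈ range K, br α i k * mr α k j = ∑ k ∈ Ico j K, br α i k * mr α k j := by
        refine (Finset.sum_subset ?_ ?_).symm
        · intro k hk
          simp only [Finset.mem_Ico] at hk
          exact Finset.mem_range.2 hk.2
        · intro k hk hnk
          simp only [Finset.mem_range] at hk
          simp only [Finset.mem_Ico, not_and, not_lt] at hnk
          have hkj : k < j := by omega
          simp only [mr]; rw [if_neg (by omega : ¬ j ≤ k), mul_zero]
      rw [hsub, hIco j le_rfl (by omega) (by omega)]
      rw [idA hα i j]
      simp only [mr]
      by_cases hij : i ≤ j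
      · rw [if_pos hij]; ring
      · rw [if_neg hij]
        have : i = j + 1 := by omega
        subst this
        have : (j : ℝ) + 1 - ((j + 1 : ℕ) : ℝ) = 0 := by push_cast; ring
        rw [this]
        ring
    · -- i ≥ j + 2
      have h2i : 2 ≤ i := by omega
      have hc2 : ((i - 2 : ℕ) : ℝ) = (i : ℝ) - 2 := by
        push_cast [Nat.cast_sub h2i]; ring
      have hc1 : ((i - 1 : ℕ) : ℝ) = (i : ℝ) - 1 := by
        push_cast [Nat.cast_sub (by omega : 1 ≤ i)]; ring
      have hsub : ∑ k ∈ range K, br α i k * mr α k j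
          = ∑ k ∈ Ico (i - 2) K, br α i k * mr α k j := by
        refine (Finset.sum_subset ?_ ?_).symm
        · intro k hk
          simp only [Finset.mem_Ico] at hk
          exact Finset.mem_range.2 hk.2
        · intro k hk hnk
          simp only [Finset.mem_range] at hk
          simp only [Finset.mem_Ico, not_and, not_lt] at hnk
          have hki : k < i - 2 := by omega
          by_cases hkj : j ≤ k
          · simp only [br]; rw [if_neg (by omega : ¬ ((i : ℤ) - 2 < (k : ℤ))), if_neg (by omega : ¬ ((k : ℤ) = (i : ℤ) - 2)), zero_mul]
          · simp only [mr]; rw [if_neg (by omega : ¬ j ≤ k), mul_zero]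
      rw [hsub, Finset.sum_eq_sum_Ico_succ_bot (by omega : i - 2 < K),
        (by omega : i - 2 + 1 = i - 1), hIco (i - 1) (by omega) (by omega) (by omega)]
      -- the special term
      have hspec : br α i (i - 2) * mr α (i - 2) j
          = 2 * ((i : ℝ) - 1 - j) / (((i : ℝ) + 1 + α) * ((i : ℝ) + 2 + α)) := by
        simp only [br, mr]
        rw [if_neg (by omega : ¬ ((i : ℤ) - 2 < ((i - 2 : ℕ) : ℤ))),
          if_pos (by omega : ((i - 2 : ℕ) : ℤ) = (i : ℤ) - 2),
          if_pos (by omega : j ≤ i - 2)]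
        rw [hc2]
        have hi2 : (2:ℝ) ≤ (i : ℝ) := by exact_mod_cast h2i
        have n1 : (i : ℝ) - 2 + 1 + α ≠ 0 := ne_of_gt (by linarith)
        have n2 : (i : ℝ) - 2 + 2 + α ≠ 0 := ne_of_gt (by linarith)
        have n3 : (i : ℝ) - 2 + 3 + α ≠ 0 := ne_of_gt (by linarith)
        have n4 : (i : ℝ) - 2 + 4 + α ≠ 0 := ne_of_gt (by linarith)
        have m1 : (i : ℝ) + 1 + α ≠ 0 := ne_of_gt (by linarith)
        have m2 : (i : ℝ) + 2 + α ≠ 0 := ne_of_gt (by linarith)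
        rw [div_mul_div_comm, div_eq_div_iff
          (mul_ne_zero (mul_ne_zero n3 n4) (mul_ne_zero n1 n2)) (mul_ne_zero m1 m2)]
        ring
      rw [hspec, hc1]
      simp only [mr]
      rw [if_neg (by omega : ¬ i ≤ j)]
      have := idC hα i j (by exact_mod_cast (by omega : 1 ≤ i))
      linarith
  rwa [hval] at hfull

end CesaroTwoAux

/-- With `M` the generalized Cesàro operator of order two and
`B` the operator with the stated matrix entries, `B M = M*`. -/
theorem B_mul_M_eq_adjoint_M (α : ℝ) (hα : α > -1)
    (M B : lp (fun _ : ℕ => ℂ) 2 →L[ℂ] lp (fun _ : ℕ => ℂ) 2)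
    (hM : ∀ i j : ℕ, (inner ℂ (e i) (M (e j)) : ℂ) =
      if j ≤ i then
        ((2 * ((i : ℝ) + 1 - j) / (((i : ℝ) + 1 + α) * ((i : ℝ) + 2 + α)) : ℝ) : ℂ)
      else 0)
    (hB : ∀ i j : ℕ, (inner ℂ (e i) (B (e j)) : ℂ) =
      if (i : ℤ) - 2 < (j : ℤ) then
        ((2 * ((j : ℝ) + 1 - 3 * i - 2 * α) /
          (((j : ℝ) + 3 + α) * ((j : ℝ) + 4 + α)) : ℝ) : ℂ)
      else if (j : ℤ) = (i : ℤ) - 2 then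
        (((((j : ℝ) + 1 + α) * ((j : ℝ) + 2 + α)) /
          ((((j : ℝ) + 3 + α)) * (((j : ℝ) + 4 + α))) : ℝ) : ℂ)
      else 0) :
    B ∘L M = adjoint M := by
  classical
  open CesaroTwoAux in
  have hα' : -1 < α := hα
  -- coordinates via inner products
  have hcoord : ∀ (y : lp (fun _ : ℕ => ℂ) 2) (n : ℕ), (inner ℂ (e n) y : ℂ) = y n := by
    intro y n
    simp [e, lp.inner_single_left, RCLike.inner_apply]
  have hMc : ∀ k j : ℕ, (M (e j) : ∀ _ : ℕ, ℂ) k = ((CesaroTwoAux.mr α k j : ℝ) : ℂ) := by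
    intro k j
    rw [← hcoord, hM k j]
    simp only [CesaroTwoAux.mr]
    split_ifs <;> simp
  have hBc : ∀ i k : ℕ, (inner ℂ (e i) (B (e k)) : ℂ) = ((CesaroTwoAux.br α i k : ℝ) : ℂ) := by
    intro i k
    rw [hB i k]
    simp only [CesaroTwoAux.br]
    split_ifs <;> simp
  have hsingle : ∀ (k : ℕ) (c : ℂ), lp.single (E := fun _ : ℕ => ℂ) 2 k c = c • e k := by
    intro k c
    rw [e, ← lp.single_smul, smul_eq_mul, mul_one]
  -- coordinate of B (M (e j))
  have hBM : ∀ i j : ℕ, (inner ℂ (e i) ((B ∘L M) (e j)) : ℂ)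
      = ((CesaroTwoAux.mr α j i : ℝ) : ℂ) := by
    intro i j
    have h1 : HasSum (fun k : ℕ => lp.single 2 k ((M (e j) : ∀ _ : ℕ, ℂ) k)) (M (e j)) :=
      lp.hasSum_single ENNReal.ofNat_ne_top _
    have h2 := h1.mapL ((innerSL ℂ (e i)).comp B)
    have h3 : HasSum (fun k : ℕ => ((CesaroTwoAux.br α i k : ℝ) : ℂ)
        * ((CesaroTwoAux.mr α k j : ℝ) : ℂ)) ((inner ℂ (e i) (B (M (e j))) : ℂ)) := by
      refine h2.congr_fun fun k => ?_
      simp only [ContinuousLinearMap.coe_comp', Function.comp_apply, innerSL_apply_apply]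
      rw [hMc k j, hsingle k, map_smul, inner_smul_right, hBc i k]
      ring
    have h4 : HasSum (fun k : ℕ => ((CesaroTwoAux.br α i k : ℝ) : ℂ)
        * ((CesaroTwoAux.mr α k j : ℝ) : ℂ)) ((CesaroTwoAux.mr α j i : ℝ) : ℂ) := by
      have := (Complex.hasSum_ofReal (f := fun k => CesaroTwoAux.br α i k * CesaroTwoAux.mr α k j)
        (x := CesaroTwoAux.mr α j i)).2 (CesaroTwoAux.key hα' i j)
      simpa [Complex.ofReal_mul] using this
    have : (inner ℂ (e i) (B (M (e j))) : ℂ) = ((CesaroTwoAux.mr α j i : ℝ) : ℂ) :=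
      h3.unique h4
    simpa using this
  -- coordinate of (adjoint M) (e j)
  have hAdj : ∀ i j : ℕ, (inner ℂ (e i) ((adjoint M) (e j)) : ℂ)
      = ((CesaroTwoAux.mr α j i : ℝ) : ℂ) := by
    intro i j
    rw [ContinuousLinearMap.adjoint_inner_right, ← inner_conj_symm, hM j i]
    simp only [CesaroTwoAux.mr]
    split_ifs <;> simp only [Complex.conj_ofReal, map_zero, Complex.ofReal_zero]
  -- the operators agree on each basis vector
  have hEq : ∀ k : ℕ, (B ∘L M) (e k) = (adjoint M) (e k) := by
    intro k
    apply lp.ext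
    funext n
    have h1 := hBM n k
    have h2 := hAdj n k
    rw [hcoord] at h1 h2
    rw [h1, h2]
  -- conclude by density (expansion in basis vectors)
  apply ContinuousLinearMap.ext
  intro x
  have h1 := (lp.hasSum_single ENNReal.ofNat_ne_top x).mapL (B ∘L M)
  have h2 := (lp.hasSum_single ENNReal.ofNat_ne_top x).mapL (adjoint M)
  have hfun : (fun k : ℕ => (B ∘L M) (lp.single 2 k (x k)))
      = fun k : ℕ => (adjoint M) (lp.single 2 k (x k)) := by
    funext k
    rw [hsingle k, map_smul, map_smul, hEq k]
  rw [hfun] at h1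
  exact h1.unique h2
end

section
/- Let α > −1 be a real number, let M = (C^(α),2) be the generalized Cesàro operator of order two on ℓ², and let B be the bounded operator on ℓ² with matrix entries b_{ij} = 2(j+1−3i−2α)/((j+3+α)(j+4+α)) if j > i−2, b_{ij} = (j+1+α)(j+2+α)/((j+3+α)(j+4+α)) if j = i−2, and b_{ij} = 0 if j < i−2. Then the matrix entries p_{ij} = ⟨B*B e_j, e_i⟩ of P = B*B are given by: p_{ii} = [i⁴ + 2(5+2α)i³ + (35+26α+6α²)i² + (50+50α+34α²+4α³)i + α⁴ + 6α³ + 45α² + 28α + 24] / [(i+3+α)²(i+4+α)²] for all i, and p_{ij} = −2α(11 + (5−α)(i+j) + 2ij − 5α + 2α²) / [(i+3+α)(i+4+α)(j+3+α)(j+4+α)] for all i ≠ j. -/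
open ContinuousLinearMap

/-- The real matrix entries of `B`: row `k`, column `m`. -/
noncomputable def bR (α : ℝ) (k m : ℕ) : ℝ :=
  if (k : ℤ) - 2 < (m : ℤ) then
    2 * ((m : ℝ) + 1 - 3 * k - 2 * α) / (((m : ℝ) + 3 + α) * ((m : ℝ) + 4 + α))
  else if (m : ℤ) = (k : ℤ) - 2 then
    (((m : ℝ) + 1 + α) * ((m : ℝ) + 2 + α)) /
      ((((m : ℝ) + 3 + α)) * (((m : ℝ) + 4 + α)))
  else 0

lemma sumCD (c d : ℝ) : ∀ n : ℕ, ∑ k ∈ Finset.range n, (c - 3 * (k : ℝ)) * (d - 3 * (k : ℝ))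
    = n * c * d - 3/2 * (c + d) * ((n : ℝ) * ((n : ℝ) - 1))
      + 3/2 * ((n : ℝ) * ((n : ℝ) - 1) * (2 * (n : ℝ) - 1))
  | 0 => by simp
  | (n + 1) => by
      rw [Finset.sum_range_succ, sumCD c d n]; push_cast; ring

set_option maxHeartbeats 1600000 in
/-- With `B` the operator with the stated matrix entries,
the matrix entries `p_{ij} = ⟨B*B e_j, e_i⟩` of the interrupter `P = B*B` are
as displayed in Lemma 3.1(c). -/
theorem interrupter_entries_of_BstarB (α : ℝ) (hα : α > -1)
    (B : lp (fun _ : ℕ => ℂ) 2 →L[ℂ] lp (fun _ : ℕ => ℂ) 2)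
    (hB : ∀ i j : ℕ, (inner ℂ (e i) (B (e j)) : ℂ) =
      if (i : ℤ) - 2 < (j : ℤ) then
        ((2 * ((j : ℝ) + 1 - 3 * i - 2 * α) /
          (((j : ℝ) + 3 + α) * ((j : ℝ) + 4 + α)) : ℝ) : ℂ)
      else if (j : ℤ) = (i : ℤ) - 2 then
        (((((j : ℝ) + 1 + α) * ((j : ℝ) + 2 + α)) /
          ((((j : ℝ) + 3 + α)) * (((j : ℝ) + 4 + α))) : ℝ) : ℂ)
      else 0) :
    ∀ i j : ℕ, (inner ℂ (e i) ((adjoint B ∘L B) (e j)) : ℂ) =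
      if i = j then
        ((((i : ℝ) ^ 4 + 2 * (5 + 2 * α) * (i : ℝ) ^ 3 +
            (35 + 26 * α + 6 * α ^ 2) * (i : ℝ) ^ 2 +
            (50 + 50 * α + 34 * α ^ 2 + 4 * α ^ 3) * (i : ℝ) +
            α ^ 4 + 6 * α ^ 3 + 45 * α ^ 2 + 28 * α + 24) /
          (((i : ℝ) + 3 + α) ^ 2 * ((i : ℝ) + 4 + α) ^ 2) : ℝ) : ℂ)
      else
        ((-(2 * α * (11 + (5 - α) * ((i : ℝ) + (j : ℝ)) + 2 * (i : ℝ) * (j : ℝ)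
            - 5 * α + 2 * α ^ 2)) /
          (((i : ℝ) + 3 + α) * ((i : ℝ) + 4 + α) *
            ((j : ℝ) + 3 + α) * ((j : ℝ) + 4 + α)) : ℝ) : ℂ) := by
  intro i j
  have hB' : ∀ k m : ℕ, (inner ℂ (e k) (B (e m)) : ℂ) = ((bR α k m : ℝ) : ℂ) := by
    intro k m
    rw [hB k m]
    unfold bR
    split_ifs <;> simp
  have hcoord : ∀ (f : lp (fun _ : ℕ => ℂ) 2) (n : ℕ), (inner ℂ (e n) f : ℂ) = f n := by
    intro f n
    simp [e, lp.inner_single_left]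
  have hz : ∀ m n : ℕ, m + 3 ≤ n → bR α n m = 0 := by
    intro m n h
    unfold bR
    rw [if_neg (by omega), if_neg (by omega)]
  -- positivity of the denominators
  have hi0 : (0:ℝ) ≤ (i:ℝ) := Nat.cast_nonneg i
  have hj0 : (0:ℝ) ≤ (j:ℝ) := Nat.cast_nonneg j
  have hi3 : ((i:ℝ) + 3 + α) ≠ 0 := by linarith
  have hi4 : ((i:ℝ) + 4 + α) ≠ 0 := by linarith
  have hj3 : ((j:ℝ) + 3 + α) ≠ 0 := by linarith
  have hj4 : ((j:ℝ) + 4 + α) ≠ 0 := by linarith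
  have hexp : B (e i) = ∑ k ∈ Finset.range (i + 3), ((bR α k i : ℝ) : ℂ) • e k := by
    apply lp.ext
    funext n
    have h1 : (B (e i) : ∀ _ : ℕ, ℂ) n = ((bR α n i : ℝ) : ℂ) := by
      rw [← hcoord, hB']
    have eapp : ∀ k m : ℕ, (e k : ∀ _ : ℕ, ℂ) m = if m = k then 1 else 0 := by
      intro k m
      by_cases h : m = k
      · subst h; simp [e, lp.single_apply]
      · simp [e, lp.single_apply, h]
    rw [h1, lp.coeFn_sum, Finset.sum_apply]
    simp only [lp.coeFn_smul, Pi.smul_apply, eapp, smul_eq_mul, mul_ite, mul_one, mul_zero]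
    rw [Finset.sum_ite_eq (Finset.range (i+3)) n (fun k => ((bR α k i : ℝ) : ℂ))]
    by_cases hn : n ∈ Finset.range (i + 3)
    · rw [if_pos hn]
    · rw [if_neg hn]
      simp only [Finset.mem_range, not_lt] at hn
      rw [hz i n (by omega)]
      simp
  rw [comp_apply, adjoint_inner_right, hexp, sum_inner]
  simp only [inner_smul_left, Complex.conj_ofReal, hB']
  have hsum : ∑ k ∈ Finset.range (i + 3), ((bR α k i : ℝ) : ℂ) * ((bR α k j : ℝ) : ℂ)
      = ((∑ k ∈ Finset.range (i + 3), bR α k i * bR α k j : ℝ) : ℂ) := by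
    norm_cast
  rw [hsum]
  split_ifs with hij
  · -- diagonal case
    subst hij
    rw [Complex.ofReal_inj]
    rw [Finset.sum_range_succ]
    rw [Finset.sum_congr rfl (fun k hk => by
      have hk' : k < i + 2 := Finset.mem_range.mp hk
      rw [show bR α k i * bR α k i
          = 4 / (((i:ℝ) + 3 + α) * ((i:ℝ) + 4 + α)) / (((i:ℝ) + 3 + α) * ((i:ℝ) + 4 + α))
            * ((((i:ℝ) + 1 - 2 * α) - 3 * k) * (((i:ℝ) + 1 - 2 * α) - 3 * k)) by
        unfold bR
        rw [if_pos (by omega)]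
        ring])]
    rw [← Finset.mul_sum, sumCD]
    unfold bR
    rw [if_neg (by omega), if_pos (by omega)]
    push_cast
    field_simp
    ring
  · -- off-diagonal
    rw [Complex.ofReal_inj]
    rcases lt_or_gt_of_ne hij with h | h
    · -- i < j : all columns-j entries generic on range (i+3)
      rw [Finset.sum_range_succ]
      rw [Finset.sum_congr rfl (fun k hk => by
        have hk' : k < i + 2 := Finset.mem_range.mp hk
        rw [show bR α k i * bR α k j
            = 4 / (((i:ℝ) + 3 + α) * ((i:ℝ) + 4 + α)) / (((j:ℝ) + 3 + α) * ((j:ℝ) + 4 + α))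
              * ((((i:ℝ) + 1 - 2 * α) - 3 * k) * (((j:ℝ) + 1 - 2 * α) - 3 * k)) by
          unfold bR
          rw [if_pos (by omega), if_pos (by omega)]
          ring])]
      rw [← Finset.mul_sum, sumCD]
      unfold bR
      rw [if_neg (by omega), if_pos (by omega), if_pos (by omega)]
      push_cast
      field_simp
      ring
    · -- j < i : truncate the sum to range (j+3)
      rw [show ∑ k ∈ Finset.range (i + 3), bR α k i * bR α k j
          = ∑ k ∈ Finset.range (j + 3), bR α k i * bR α k j from
        (Finset.sum_subset (Finset.range_subset_range.mpr (by omega)) (fun k _ hk => by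
          have hk' : j + 3 ≤ k := by simpa using Finset.mem_range.not.mp hk |> le_of_not_gt
          rw [hz j k hk', mul_zero])).symm]
      rw [Finset.sum_range_succ]
      rw [Finset.sum_congr rfl (fun k hk => by
        have hk' : k < j + 2 := Finset.mem_range.mp hk
        rw [show bR α k i * bR α k j
            = 4 / (((i:ℝ) + 3 + α) * ((i:ℝ) + 4 + α)) / (((j:ℝ) + 3 + α) * ((j:ℝ) + 4 + α))
              * ((((i:ℝ) + 1 - 2 * α) - 3 * k) * (((j:ℝ) + 1 - 2 * α) - 3 * k)) by
          unfold bR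
          rw [if_pos (by omega), if_pos (by omega)]
          ring])]
      rw [← Finset.mul_sum, sumCD]
      unfold bR
      rw [if_pos (by omega), if_neg (by omega), if_pos (by omega)]
      push_cast
      field_simp
      ring
end
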